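/- Let φ be a Horn formula without positive unit clauses. There is a bijection between the connected components of G(φ) and the maximal self-implicating sets of variables of φ that contain no restraint set; the set corresponding to a component is exactly the set of variables assigned 1 in the minimum solution of that component. -/

import Mathlib

def SatClause {n : ℕ} (a : Fin n → Bool) (c : List (Fin n × Bool)) : Prop :=
  ∃ l ∈ c, (if l.2 then a l.1 else !(a l.1)) = true

def IsHornClause {n : ℕ} (c : List (Fin n × Bool)) : Prop :=
  (c.filter (fun l => l.2)).length ≤ 1

def Reach {ι : Type*} [Fintype ι] (S : Set (ι → Bool)) : (ι → Bool) → (ι → Bool) → Prop :=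
  Relation.ReflTransGen (fun u v => u ∈ S ∧ v ∈ S ∧ hammingDist u v = 1)

/-- `x` is implied by the variable set `U`: setting all of `U` to 1 forces `x = 1`
in every solution. -/
def Implied {n : ℕ} (S : Set (Fin n → Bool)) (U : Finset (Fin n)) (x : Fin n) : Prop :=
  ∀ a ∈ S, (∀ u ∈ U, a u = true) → a x = true

/-- `U` is maximal self-implicating: every `x ∈ U` is implied by `U \ {x}`,
and `U = Imp(U)`. -/
def MaxSelfImplicating {n : ℕ} (S : Set (Fin n → Bool)) (U : Finset (Fin n)) : Prop :=
  (∀ x ∈ U, Implied S (U.erase x) x) ∧ (∀ x, Implied S U x → x ∈ U)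

/-- `U` contains no restraint set (variable set of a clause with only negative literals). -/
def NoRestraintSet {n : ℕ} (φ : List (List (Fin n × Bool))) (U : Finset (Fin n)) : Prop :=
  ∀ c ∈ φ, (∀ l ∈ c, l.2 = false) → ¬ (∀ l ∈ c, l.1 ∈ U)

lemma hamming_one {n : ℕ} {u v : Fin n → Bool} (h : hammingDist u v = 1) :
    ∃ j, u j ≠ v j ∧ ∀ i, i ≠ j → u i = v i := by
  rw [hammingDist, Finset.card_eq_one] at h
  obtain ⟨j, hj⟩ := h
  refine ⟨j, ?_, ?_⟩
  · have : j ∈ Finset.univ.filter (fun i => u i ≠ v i) := hj ▸ Finset.mem_singleton_self j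
    simpa using this
  · intro i hi
    by_contra hne
    have : i ∈ Finset.univ.filter (fun i => u i ≠ v i) := by simpa using hne
    rw [hj] at this
    exact hi (Finset.mem_singleton.mp this)

lemma pos_unique {n : ℕ} {c : List (Fin n × Bool)} (hc : IsHornClause c)
    {l l' : Fin n × Bool} (hl : l ∈ c) (hl' : l' ∈ c) (h2 : l.2 = true) (h2' : l'.2 = true) :
    l = l' := by
  have m1 : l ∈ c.filter (fun l => l.2) := List.mem_filter.mpr ⟨hl, h2⟩
  have m2 : l' ∈ c.filter (fun l => l.2) := List.mem_filter.mpr ⟨hl', h2'⟩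
  unfold IsHornClause at hc
  rcases hfl : c.filter (fun l => l.2) with _ | ⟨x, _ | ⟨y, t⟩⟩
  · rw [hfl] at m1; simp at m1
  · rw [hfl] at m1 m2; simp at m1 m2; rw [m1, m2]
  · rw [hfl] at hc; simp at hc

lemma horn_and {n : ℕ} {c : List (Fin n × Bool)} (hc : IsHornClause c)
    {a b : Fin n → Bool} (ha : SatClause a c) (hb : SatClause b c) :
    SatClause (fun i => a i && b i) c := by
  obtain ⟨l, hl, hla⟩ := ha
  obtain ⟨l', hl', hlb⟩ := hb
  rcases h2 : l.2 with _ | _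
  · refine ⟨l, hl, ?_⟩
    rw [h2] at hla ⊢
    simp only [if_neg Bool.false_ne_true, Bool.not_eq_true'] at hla ⊢
    simp [hla]
  · rcases h2' : l'.2 with _ | _
    · refine ⟨l', hl', ?_⟩
      rw [h2'] at hlb ⊢
      simp only [if_neg Bool.false_ne_true, Bool.not_eq_true'] at hlb ⊢
      simp [hlb]
    · have heq : l = l' := pos_unique hc hl hl' h2 h2'
      subst heq
      refine ⟨l, hl, ?_⟩
      rw [h2] at hla hlb ⊢
      simp only [if_true] at hla hlb ⊢
      simp [hla, hlb]

lemma band_of_le {x y : Bool} (h : x ≤ y) : (x && y) = x := by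
  revert h; cases x <;> cases y <;> decide

lemma true_le {x y : Bool} (h : x ≤ y) (hx : x = true) : y = true := by
  subst hx; revert h; cases y <;> decide

lemma dist_update {n : ℕ} {a : Fin n → Bool} {j : Fin n} (hj : a j = true) :
    hammingDist a (Function.update a j false) = 1 := by
  rw [hammingDist, Finset.card_eq_one]
  refine ⟨j, ?_⟩
  ext i
  by_cases h : i = j
  · subst h; simp [Function.update_self, hj]
  · simp [Function.update_of_ne h, h]

lemma locmin_min {n : ℕ} {S : Set (Fin n → Bool)}
    (hand : ∀ a ∈ S, ∀ b ∈ S, (fun i => a i && b i) ∈ S)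
    {m : Fin n → Bool} (hm : m ∈ S)
    (hloc : ∀ j, m j = true → Function.update m j false ∉ S)
    {b : Fin n → Bool} (hr : Reach S m b) : m ≤ b := by
  induction hr with
  | refl => exact le_refl _
  | @tail b c hab hstep ih =>
    obtain ⟨hbS, hcS, hd⟩ := hstep
    obtain ⟨j, hj, hrest⟩ := hamming_one hd
    intro i
    rcases hci : c i with _ | _
    · rcases hmi : m i with _ | _
      · exact Bool.false_le _
      · exfalso
        by_cases hij : i = j
        · subst hij
          have hbc : (fun k => m k && c k) = Function.update m i false := by
            funext k
            by_cases hk : k = i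
            · subst hk; simp [Function.update_self, hci]
            · rw [Function.update_of_ne hk]
              exact band_of_le ((hrest k hk) ▸ ih k)
          have hmem : Function.update m i false ∈ S := hbc ▸ hand m hm c hcS
          exact hloc i hmi hmem
        · have hbi : b i = true := true_le (ih i) hmi
          rw [hrest i hij] at hbi
          rw [hci] at hbi
          exact Bool.false_ne_true hbi
    · exact Bool.le_true _

lemma descend {n : ℕ} {S : Set (Fin n → Bool)} :
    ∀ k, ∀ a ∈ S, (Finset.univ.filter (fun i => a i = true)).card ≤ k →
    ∃ m ∈ S, Reach S a m ∧ ∀ j, m j = true → Function.update m j false ∉ S := by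
  intro k
  induction k with
  | zero =>
    intro a ha hcard
    refine ⟨a, ha, Relation.ReflTransGen.refl, ?_⟩
    intro j hj _
    have : j ∈ Finset.univ.filter (fun i => a i = true) := by simp [hj]
    have := Finset.card_pos.mpr ⟨j, this⟩
    omega
  | succ k ih =>
    intro a ha hcard
    by_cases hloc : ∀ j, a j = true → Function.update a j false ∉ S
    · exact ⟨a, ha, Relation.ReflTransGen.refl, hloc⟩
    · push_neg at hloc
      obtain ⟨j, hj, hjS⟩ := hloc
      have hset : Finset.univ.filter (fun i => Function.update a j false i = true)
          = (Finset.univ.filter (fun i => a i = true)).erase j := by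
        ext i
        by_cases h : i = j
        · subst h; simp [Function.update_self]
        · simp [Function.update_of_ne h, h]
      have hjmem : j ∈ Finset.univ.filter (fun i => a i = true) := by simp [hj]
      have hcard' : (Finset.univ.filter (fun i => Function.update a j false i = true)).card ≤ k := by
        rw [hset, Finset.card_erase_of_mem hjmem]
        have := Finset.card_pos.mpr ⟨j, hjmem⟩
        omega
      obtain ⟨m, hmS, hreach, hmloc⟩ := ih (Function.update a j false) hjS hcard'
      exact ⟨m, hmS, Relation.ReflTransGen.head ⟨ha, hjS, dist_update hj⟩ hreach, hmloc⟩

theorem horn_components_biject_with_max_self_implicating_sets (n : ℕ)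
    (φ : List (List (Fin n × Bool)))
    (hHorn : ∀ c ∈ φ, IsHornClause c)
    (hNoPosUnit : ∀ c ∈ φ, ∀ i : Fin n, c ≠ [(i, true)]) :
    let S : Set (Fin n → Bool) := {a | ∀ c ∈ φ, SatClause a c}
    let Min : Set (Fin n → Bool) := {m | m ∈ S ∧ ∀ b ∈ S, Reach S m b → m ≤ b}
    (∀ a ∈ S, ∃ m ∈ Min, Reach S a m) ∧
    (∀ m ∈ Min, ∀ m' ∈ Min, Reach S m m' → m = m') ∧
    (∀ m ∈ Min, MaxSelfImplicating S (Finset.univ.filter (fun i => m i = true)) ∧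
      NoRestraintSet φ (Finset.univ.filter (fun i => m i = true))) ∧
    (∀ U : Finset (Fin n), MaxSelfImplicating S U → NoRestraintSet φ U →
      (fun i => decide (i ∈ U)) ∈ Min) := by
  intro S Min
  have hand : ∀ a ∈ S, ∀ b ∈ S, (fun i => a i && b i) ∈ S := by
    intro a ha b hb c hc
    exact horn_and (hHorn c hc) (ha c hc) (hb c hc)
  have hsymm : Symmetric (fun u v : Fin n → Bool => u ∈ S ∧ v ∈ S ∧ hammingDist u v = 1) := by
    rintro u v ⟨hu, hv, hd⟩
    exact ⟨hv, hu, by rwa [hammingDist_comm]⟩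
  -- Min elements are exactly locally minimal solutions
  have hMin_of_loc : ∀ m ∈ S, (∀ j, m j = true → Function.update m j false ∉ S) → m ∈ Min := by
    intro m hm hloc
    exact ⟨hm, fun b hb hr => locmin_min hand hm hloc hr⟩
  have hloc_of_Min : ∀ m ∈ Min, ∀ j, m j = true → Function.update m j false ∉ S := by
    intro m hm j hj hupd
    have hr : Reach S m (Function.update m j false) :=
      Relation.ReflTransGen.single ⟨hm.1, hupd, dist_update hj⟩
    have := hm.2 _ hupd hr j
    rw [hj, Function.update_self] at this
    exact Bool.false_ne_true (true_le this rfl)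
  refine ⟨?_, ?_, ?_, ?_⟩
  · -- existence of minimum in each component
    intro a ha
    obtain ⟨m, hmS, hreach, hmloc⟩ :=
      descend (S := S) (Finset.univ.filter (fun i => a i = true)).card a ha le_rfl
    exact ⟨m, hMin_of_loc m hmS hmloc, hreach⟩
  · -- uniqueness
    intro m hm m' hm' hr
    have h1 : m ≤ m' := hm.2 m' hm'.1 hr
    have h2 : m' ≤ m := hm'.2 m hm.1 (by haveI : Std.Symm (fun u v : Fin n → Bool => u ∈ S ∧ v ∈ S ∧ hammingDist u v = 1) := ⟨fun a b h => hsymm h⟩; exact Relation.ReflTransGen.symmetric.symm _ _ hr)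
    exact le_antisymm h1 h2
  · -- 1-set of a minimum is max self-implicating with no restraint set
    intro m hm
    refine ⟨⟨?_, ?_⟩, ?_⟩
    · -- self-implicating
      intro x hx a ha hau
      rw [Finset.mem_filter] at hx
      by_contra hax
      have hax' : a x = false := by
        rcases h : a x with _ | _
        · rfl
        · exact absurd h hax
      have hbc : (fun k => m k && a k) = Function.update m x false := by
        funext k
        by_cases hk : k = x
        · subst hk; simp [Function.update_self, hax']
        · rw [Function.update_of_ne hk]
          rcases hmk : m k with _ | _
          · simp
          · have hkU : k ∈ (Finset.univ.filter (fun i => m i = true)).erase x := by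
              simp [Finset.mem_erase, hk, hmk]
            rw [hau k hkU]; simp
      have : Function.update m x false ∈ S := hbc ▸ hand m hm.1 a ha
      exact hloc_of_Min m hm x hx.2 this
    · -- maximality
      intro x hx
      have := hx m hm.1 (by intro u hu; exact (Finset.mem_filter.mp hu).2)
      simp [this]
    · -- no restraint set
      intro c hc hneg hall
      obtain ⟨l, hl, hsat⟩ := hm.1 c hc
      rw [hneg l hl] at hsat
      simp only [if_neg Bool.false_ne_true, Bool.not_eq_true'] at hsat
      have := hall l hl
      rw [Finset.mem_filter] at this
      rw [this.2] at hsat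
      exact absurd hsat (by decide)
  · -- converse: every max self-implicating set without restraint set is a minimum
    intro U hU hNR
    have haU : (fun i => decide (i ∈ U)) ∈ S := by
      intro c hc
      by_contra hns
      have hneg : ∀ l ∈ c, l.2 = false → l.1 ∈ U := by
        intro l hl h2
        by_contra hlu
        apply hns
        refine ⟨l, hl, ?_⟩
        rw [h2]
        simp [hlu]
      by_cases hpos : ∃ l ∈ c, l.2 = true
      · obtain ⟨l₀, hl₀, h₀⟩ := hpos
        have hinU : l₀.1 ∈ U := by
          apply hU.2
          intro a ha hau
          obtain ⟨l, hl, hsat⟩ := ha c hc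
          rcases h2 : l.2 with _ | _
          · rw [h2] at hsat
            simp only [if_neg Bool.false_ne_true, Bool.not_eq_true'] at hsat
            rw [hau l.1 (hneg l hl h2)] at hsat
            exact absurd hsat (by simp)
          · have heq : l = l₀ := pos_unique (hHorn c hc) hl hl₀ h2 h₀
            rw [h2] at hsat
            simp only [if_true] at hsat
            rw [← heq]
            exact hsat
        apply hns
        refine ⟨l₀, hl₀, ?_⟩
        rw [h₀]
        simp [hinU]
      · push_neg at hpos
        have hneg' : ∀ l ∈ c, l.2 = false := by
          intro l hl
          rcases h : l.2 with _ | _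
          · rfl
          · exact absurd h (hpos l hl)
        exact hNR c hc hneg' (fun l hl => hneg l hl (hneg' l hl))
    refine ⟨haU, ?_⟩
    intro b hb hr
    have key : ∀ u ∈ U, b u = true := by
      clear hb
      induction hr with
      | refl => intro u hu; simp [hu]
      | @tail b c hab hstep ih =>
        obtain ⟨hbS, hcS, hd⟩ := hstep
        obtain ⟨j, hj, hrest⟩ := hamming_one hd
        intro u hu
        by_cases huj : u = j
        · subst huj
          rcases h : c u with _ | _
          · exfalso
            have himp := hU.1 u hu c hcS
            have : ∀ v ∈ U.erase u, c v = true := by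
              intro v hv
              rw [Finset.mem_erase] at hv
              rw [← hrest v hv.1]
              exact ih v hv.2
            rw [himp this] at h
            exact absurd h (by decide)
          · rfl
        · rw [← hrest u huj]
          exact ih u hu
    intro i
    show decide (i ∈ U) ≤ b i
    by_cases h : i ∈ U
    · rw [key i h]; exact Bool.le_true _
    · simp [h]
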